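/- Let 𝒳 be a finite set and let P be any property of choice rules on 𝒳 (a choice axiom). Then P is punctual — i.e., there exists a correspondence φ assigning to each A ⊆ 𝒳 a collection φ(A) of subsets of A such that a choice rule C satisfies P if and only if C(A) ∈ φ(A) for every A ⊆ 𝒳 — if and only if P is closed under combinations: for all choice rules C, C′, C″ on 𝒳, if C′ and C″ satisfy P and for every A ⊆ 𝒳 either C(A) = C′(A) or C(A) = C″(A), then C satisfies P. -/

import Mathlib

/-- A choice rule on a finite set `α` is a map `C : Finset α → Finset α`
with `C A ⊆ A` for every `A`.  A choice axiom is a property `P` of choice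
rules.  `P` is *punctual* if there is a correspondence `φ` assigning to each
`A ⊆ 𝒳` a collection `φ A` of subsets of `A` such that a choice rule
satisfies `P` iff it is a selection from `φ`. -/
theorem punctual_iff_closed_under_combinations
    {α : Type*} [Fintype α] [DecidableEq α]
    (P : (Finset α → Finset α) → Prop) :
    (∃ φ : Finset α → Set (Finset α),
        (∀ A : Finset α, ∀ Y ∈ φ A, Y ⊆ A) ∧
        ∀ C : Finset α → Finset α, (∀ A, C A ⊆ A) →
          (P C ↔ ∀ A, C A ∈ φ A)) ↔
    (∀ C C' C'' : Finset α → Finset α,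
        (∀ A, C A ⊆ A) → (∀ A, C' A ⊆ A) → (∀ A, C'' A ⊆ A) →
        P C' → P C'' →
        (∀ A, C A = C' A ∨ C A = C'' A) → P C) := by
  constructor
  · rintro ⟨φ, hsub, hiff⟩ C C' C'' hC hC' hC'' hP' hP'' hcomb
    rw [hiff C hC]
    intro A
    rcases hcomb A with h | h
    · rw [h]; exact ((hiff C' hC').mp hP') A
    · rw [h]; exact ((hiff C'' hC'').mp hP'') A
  · intro hclo
    refine ⟨fun A => {Y | ∃ C, (∀ B, C B ⊆ B) ∧ P C ∧ C A = Y}, ?_, ?_⟩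
    · rintro A Y ⟨C, hC, _, rfl⟩; exact hC A
    · intro C hC
      constructor
      · intro hP A; exact ⟨C, hC, hP, rfl⟩
      · intro h
        have key : ∀ S : Finset (Finset α), ∃ D : Finset α → Finset α,
            (∀ B, D B ⊆ B) ∧ P D ∧ ∀ A ∈ S, D A = C A := by
          intro S
          induction S using Finset.induction with
          | empty =>
            obtain ⟨D, hD, hPD, _⟩ := h ∅
            exact ⟨D, hD, hPD, fun A hA => absurd hA (Finset.notMem_empty A)⟩
          | @insert A S hnotmem ih =>
            obtain ⟨D, hD, hPD, hDS⟩ := ih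
            obtain ⟨E, hE, hPE, hEA⟩ := h A
            refine ⟨fun B => if B = A then E B else D B, ?_, ?_, ?_⟩
            · intro B; dsimp only; split
              · exact hE B
              · exact hD B
            · refine hclo _ E D ?_ hE hD hPE hPD ?_
              · intro B; split
                · exact hE B
                · exact hD B
              · intro B; split
                · exact Or.inl rfl
                · exact Or.inr rfl
            · intro B hB
              rcases Finset.mem_insert.mp hB with rfl | hB
              · simp [hEA]
              · have hBA : B ≠ A := fun hba => hnotmem (hba ▸ hB)
                simp [hBA, hDS B hB]
        obtain ⟨D, hD, hPD, hDC⟩ := key Finset.univ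
        have hDCeq : D = C := funext fun A => hDC A (Finset.mem_univ A)
        exact hDCeq ▸ hPD
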